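/- Let k and l be integers with gcd(3, k, l) = 1 satisfying condition (B) for n = 3: 3 ∣ k+l or 3 ∣ 2k−l or 3 ∣ 2l−k. Then E_3(k,l) is isomorphic to the free product C_3 ∗ C_3 of two cyclic groups of order three, and the cyclic group C_3 acts freely via the shift on the nonidentity elements of G_3(k,l): for every g ∈ G_3(k,l) with g ≠ 1 and every j ∈ {1, 2}, θ^j(g) ≠ g. -/

import Mathlib

namespace CPG

/-- The free group on generators `x_0, …, x_{n-1}` indexed by `ZMod n`. -/
abbrev FG (n : ℕ) := FreeGroup (ZMod n)

/-- The automorphism of the free group sending `x_j` to `x_{j+i}`. -/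
def shiftA (n : ℕ) (i : ZMod n) : MulAut (FG n) :=
  FreeGroup.freeGroupCongr (Equiv.addRight i)

/-- The shift automorphism `θ` of the free group, `x_j ↦ x_{j+1}`. -/
def shiftAut (n : ℕ) : MulAut (FG n) := shiftA n 1

/-- The `θ`-orbit of a word `w`: the relator set of the cyclic presentation `P_n(w)`. -/
def rels (n : ℕ) (w : FG n) : Set (FG n) := Set.range fun i : ZMod n => shiftA n i w

/-- The cyclically presented group `G_n(w)`. -/
abbrev Gp (n : ℕ) (w : FG n) := PresentedGroup (rels n w)

lemma shiftA_shiftA (n : ℕ) (i j : ZMod n) (x : FG n) :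
    shiftA n i (shiftA n j x) = shiftA n (j + i) x := by
  show FreeGroup.map _ (FreeGroup.map _ x) = FreeGroup.map _ x
  rw [FreeGroup.map.comp]
  have h : (⇑(Equiv.addRight i) ∘ ⇑(Equiv.addRight j)) = ⇑(Equiv.addRight (j + i)) := by
    funext z
    simp [add_assoc]
  rw [h]

lemma image_shiftAut_rels (n : ℕ) (w : FG n) :
    (shiftAut n) '' rels n w = rels n w := by
  ext r
  constructor
  · rintro ⟨s, ⟨i, rfl⟩, rfl⟩
    exact ⟨i + 1, (shiftA_shiftA n 1 i w).symm⟩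
  · rintro ⟨i, rfl⟩
    refine ⟨shiftA n (i - 1) w, ⟨i - 1, rfl⟩, ?_⟩
    rw [shiftAut, shiftA_shiftA, sub_add_cancel]

lemma map_normalClosure_rels (n : ℕ) (w : FG n) :
    (Subgroup.normalClosure (rels n w)).map (shiftAut n).toMonoidHom
      = Subgroup.normalClosure (rels n w) := by
  rw [Subgroup.map_normalClosure (rels n w) (shiftAut n).toMonoidHom (shiftAut n).surjective]
  congr 1
  exact image_shiftAut_rels n w

/-- The shift automorphism `θ` of the cyclically presented group `G_n(w)`. -/
def shiftG (n : ℕ) (w : FG n) : MulAut (Gp n w) :=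
  QuotientGroup.congr (Subgroup.normalClosure (rels n w)) (Subgroup.normalClosure (rels n w))
    (shiftAut n) (map_normalClosure_rels n w)

/-- The generator `x_k` (subscript mod `n`). -/
def xg (n : ℕ) (k : ℤ) : FG n := FreeGroup.of (k : ZMod n)

/-- The word `x_0 x_k x_l`. -/
def wkl (n : ℕ) (k l : ℤ) : FG n := xg n 0 * xg n k * xg n l

/-- The cyclically presented group `G_n(k,l) = G_n(x_0 x_k x_l)`. -/
abbrev Gkl (n : ℕ) (k l : ℤ) := Gp n (wkl n k l)

/-- The shift automorphism of `G_n(k,l)`. -/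
def shiftKL (n : ℕ) (k l : ℤ) : MulAut (Gkl n k l) := shiftG n (wkl n k l)

end CPG

namespace CPG

/-- The generator `a` of the free group on `{a, x}` (modeled on `Bool`, `a = of false`). -/
def ga : FreeGroup Bool := FreeGroup.of false

/-- The generator `x` of the free group on `{a, x}` (`x = of true`). -/
def gx : FreeGroup Bool := FreeGroup.of true

/-- The relator set of the presentation `(a, x : a^n, W)`. -/
def rels2 (n : ℕ) (W : FreeGroup Bool) : Set (FreeGroup Bool) := {ga ^ n, W}

/-- The group with presentation `(a, x : a^n, W)`. -/
abbrev E2 (n : ℕ) (W : FreeGroup Bool) := PresentedGroup (rels2 n W)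

/-- The image of `a` in `(a, x : a^n, W)`. -/
def a2 (n : ℕ) (W : FreeGroup Bool) : E2 n W := PresentedGroup.of false

/-- The image of `x` in `(a, x : a^n, W)`. -/
def x2 (n : ℕ) (W : FreeGroup Bool) : E2 n W := PresentedGroup.of true

/-- The relator set of `E_n(k,l) = (a, x : a^n, x a^k x a^(l-k) x a^(-l))`. -/
def relsE (n : ℕ) (k l : ℤ) : Set (FreeGroup Bool) :=
  {ga ^ n, gx * ga ^ k * gx * ga ^ (l - k) * gx * ga ^ (-l)}

/-- The group `E_n(k,l)` with presentation `(a, x : a^n, x a^k x a^(l-k) x a^(-l))`. -/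
abbrev Ekl (n : ℕ) (k l : ℤ) := PresentedGroup (relsE n k l)

/-- The image of `a` in `E_n(k,l)`. -/
def aE (n : ℕ) (k l : ℤ) : Ekl n k l := PresentedGroup.of false

/-- The image of `x` in `E_n(k,l)`. -/
def xE (n : ℕ) (k l : ℤ) : Ekl n k l := PresentedGroup.of true

end CPG




namespace WordAux

abbrev Ltr := Bool × Bool

def ψ : List Ltr → List Ltr
  | [] => []
  | (false, true) :: (true, true) :: r => (false, false) :: ψ r
  | (true, false) :: (false, false) :: r => (false, true) :: ψ r
  | (false, true) :: r => (true, true) :: ψ r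
  | (false, false) :: r => (true, false) :: ψ r
  | (true, true) :: r => (true, false) :: (false, false) :: ψ r
  | (true, false) :: r => (false, true) :: (true, true) :: ψ r

def f2 : Ltr → Option Ltr → Ltr
  | (false, true), some (true, true) => (false, false)
  | (false, true), _ => (true, true)
  | (false, false), _ => (true, false)
  | (true, true), _ => (true, false)
  | (true, false), some (false, false) => (false, true)
  | (true, false), _ => (false, true)

lemma psi_head (p : Ltr) (r : List Ltr) :
    (ψ (p :: r)).head? = some (f2 p r.head?) := by
  rcases p with ⟨_|_, _|_⟩ <;> rcases r with _ | ⟨⟨_|_, _|_⟩, r⟩ <;> rfl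

lemma f2_ne (p : Ltr) (h : Option Ltr) : f2 p h ≠ p := by
  rcases p with ⟨_|_, _|_⟩ <;> rcases h with _ | ⟨_|_, _|_⟩ <;> simp [f2]

abbrev Rd (L : List Ltr) : Prop := List.Chain' (fun a b => ¬(a.1 = b.1 ∧ a.2 = !b.2)) L

lemma f2_x (h : Option Ltr) :
    f2 (false, true) h = (false, false) ∨ f2 (false, true) h = (true, true) := by
  rcases h with _ | ⟨_|_, _|_⟩ <;> simp [f2]

lemma f2_X (h : Option Ltr) : f2 (false, false) h = (true, false) := by
  rcases h with _ | ⟨_|_, _|_⟩ <;> rfl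

lemma f2_y (h : Option Ltr) : f2 (true, true) h = (true, false) := by
  rcases h with _ | ⟨_|_, _|_⟩ <;> rfl

lemma f2_Y (h : Option Ltr) : f2 (true, false) h = (false, true) := by
  rcases h with _ | ⟨_|_, _|_⟩ <;> rfl

lemma psi_eq_x (r : List Ltr) (hg : ∀ r', r = (true, true) :: r' → False) :
    ψ ((false, true) :: r) = (true, true) :: ψ r := by
  rcases r with _ | ⟨⟨_|_, _|_⟩, r'⟩ <;> first | rfl | exact (hg r' rfl).elim

lemma psi_eq_Y (r : List Ltr) (hg : ∀ r', r = (false, false) :: r' → False) :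
    ψ ((true, false) :: r) = (false, true) :: (true, true) :: ψ r := by
  rcases r with _ | ⟨⟨_|_, _|_⟩, r'⟩ <;> first | rfl | exact (hg r' rfl).elim

lemma reduce_eq_self : ∀ {L : List Ltr}, Rd L → FreeGroup.reduce L = L := by
  intro L
  induction L with
  | nil => intro _; rfl
  | cons a L ih =>
    intro h
    rw [FreeGroup.reduce.cons]
    rw [ih h.tail]
    cases L with
    | nil => rfl
    | cons b L' =>
      have hc : ¬(a.1 = b.1 ∧ a.2 = !b.2) := (List.isChain_cons_cons.mp h).1
      simp only [hc, if_false]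

lemma rd_reduce : ∀ (L : List Ltr), Rd (FreeGroup.reduce L) := by
  intro L
  induction L with
  | nil => exact List.isChain_nil
  | cons a L ih =>
    rw [FreeGroup.reduce.cons]
    rcases hL : FreeGroup.reduce L with _ | ⟨b, L'⟩
    · exact List.isChain_singleton a
    · rw [hL] at ih
      by_cases hc : a.1 = b.1 ∧ a.2 = !b.2
      · simp only [hc, and_self, if_true]
        exact ih.tail
      · simp only [hc, if_false]
        exact List.isChain_cons_cons.mpr ⟨hc, ih⟩

lemma psi_rd (L : List Ltr) : Rd L → Rd (ψ L) := by
  induction L using ψ.induct with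
  | case1 => intro _; exact List.isChain_nil
  | case2 r ih =>
    intro h
    show Rd ((false, false) :: ψ r)
    refine List.isChain_cons.mpr ⟨?_, ih h.tail.tail⟩
    intro v hv
    rcases r with _ | ⟨q, r'⟩
    · simp [ψ] at hv
    · rw [psi_head] at hv
      simp only [Option.mem_some_iff] at hv
      subst hv
      have hq := (List.isChain_cons_cons.mp h.tail).1
      rcases q with ⟨_|_, _|_⟩ <;>
        first
          | (rw [f2_X]; decide)
          | (rw [f2_y]; decide)
          | (rw [f2_Y]; decide)
          | (rcases f2_x r'.head? with h' | h' <;> rw [h'] <;> decide)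
          | exact (hq (by decide)).elim
  | case3 r ih =>
    intro h
    show Rd ((false, true) :: ψ r)
    refine List.isChain_cons.mpr ⟨?_, ih h.tail.tail⟩
    intro v hv
    rcases r with _ | ⟨q, r'⟩
    · simp [ψ] at hv
    · rw [psi_head] at hv
      simp only [Option.mem_some_iff] at hv
      subst hv
      have hq := (List.isChain_cons_cons.mp h.tail).1
      rcases q with ⟨_|_, _|_⟩ <;>
        first
          | (rw [f2_X]; decide)
          | (rw [f2_y]; decide)
          | (rw [f2_Y]; decide)
          | (rcases f2_x r'.head? with h' | h' <;> rw [h'] <;> decide)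
          | exact (hq (by decide)).elim
  | case4 r hg ih =>
    intro h
    rw [psi_eq_x r hg]
    refine List.isChain_cons.mpr ⟨?_, ih h.tail⟩
    intro v hv
    rcases r with _ | ⟨q, r'⟩
    · simp [ψ] at hv
    · rw [psi_head] at hv
      simp only [Option.mem_some_iff] at hv
      subst hv
      have hq := (List.isChain_cons_cons.mp h).1
      rcases q with ⟨_|_, _|_⟩ <;>
        first
          | exact (hg r' rfl).elim
          | (rw [f2_X]; decide)
          | (rw [f2_y]; decide)
          | (rw [f2_Y]; decide)
          | (rcases f2_x r'.head? with h' | h' <;> rw [h'] <;> decide)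
          | exact (hq (by decide)).elim
  | case5 r ih =>
    intro h
    show Rd ((true, false) :: ψ r)
    refine List.isChain_cons.mpr ⟨?_, ih h.tail⟩
    intro v hv
    rcases r with _ | ⟨q, r'⟩
    · simp [ψ] at hv
    · rw [psi_head] at hv
      simp only [Option.mem_some_iff] at hv
      subst hv
      have hq := (List.isChain_cons_cons.mp h).1
      rcases q with ⟨_|_, _|_⟩ <;>
        first
          | (rw [f2_X]; decide)
          | (rw [f2_y]; decide)
          | (rw [f2_Y]; decide)
          | (rcases f2_x r'.head? with h' | h' <;> rw [h'] <;> decide)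
          | exact (hq (by decide)).elim
  | case6 r ih =>
    intro h
    show Rd ((true, false) :: (false, false) :: ψ r)
    refine List.isChain_cons.mpr ⟨?_, ?_⟩
    case _ => intro v hv; simp only [List.head?_cons, Option.mem_some_iff] at hv; subst hv; decide
    refine List.isChain_cons.mpr ⟨?_, ih h.tail⟩
    intro v hv
    rcases r with _ | ⟨q, r'⟩
    · simp [ψ] at hv
    · rw [psi_head] at hv
      simp only [Option.mem_some_iff] at hv
      subst hv
      have hq := (List.isChain_cons_cons.mp h).1
      rcases q with ⟨_|_, _|_⟩ <;>
        first
          | (rw [f2_X]; decide)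
          | (rw [f2_y]; decide)
          | (rw [f2_Y]; decide)
          | (rcases f2_x r'.head? with h' | h' <;> rw [h'] <;> decide)
          | exact (hq (by decide)).elim
  | case7 r hg ih =>
    intro h
    rw [psi_eq_Y r hg]
    refine List.isChain_cons.mpr ⟨?_, ?_⟩
    case _ => intro v hv; simp only [List.head?_cons, Option.mem_some_iff] at hv; subst hv; decide
    refine List.isChain_cons.mpr ⟨?_, ih h.tail⟩
    intro v hv
    rcases r with _ | ⟨q, r'⟩
    · simp [ψ] at hv
    · rw [psi_head] at hv
      simp only [Option.mem_some_iff] at hv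
      subst hv
      have hq := (List.isChain_cons_cons.mp h).1
      rcases q with ⟨_|_, _|_⟩ <;>
        first
          | exact (hg r' rfl).elim
          | (rw [f2_X]; decide)
          | (rw [f2_y]; decide)
          | (rw [f2_Y]; decide)
          | (rcases f2_x r'.head? with h' | h' <;> rw [h'] <;> decide)
          | exact (hq (by decide)).elim

/-- the automorphism-as-hom `x ↦ y`, `y ↦ (xy)⁻¹` of the free group on two generators,
where `x = of false`, `y = of true`. -/
def φW : FreeGroup Bool →* FreeGroup Bool :=
  FreeGroup.lift (fun t => if t then (FreeGroup.of false * FreeGroup.of true)⁻¹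
    else FreeGroup.of true)

@[simp] lemma φW_x : φW (FreeGroup.of false) = FreeGroup.of true := by
  simp [φW]

@[simp] lemma φW_y : φW (FreeGroup.of true) = (FreeGroup.of false * FreeGroup.of true)⁻¹ := by
  simp [φW]

lemma mk_cons (p : Ltr) (L : List Ltr) :
    FreeGroup.mk (p :: L) =
      (if p.2 then FreeGroup.of p.1 else (FreeGroup.of p.1)⁻¹) * FreeGroup.mk L := by
  rcases p with ⟨a, _ | _⟩
  · have h1 : (FreeGroup.of a)⁻¹ = FreeGroup.mk [(a, false)] := by
      rw [show (FreeGroup.of a : FreeGroup Bool) = FreeGroup.mk [(a, true)] from rfl,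
        FreeGroup.inv_mk]
      rfl
    rw [if_neg (by simp), h1, FreeGroup.mul_mk]
    rfl
  · rw [if_pos rfl, show (FreeGroup.of a : FreeGroup Bool) = FreeGroup.mk [(a, true)] from rfl,
      FreeGroup.mul_mk]
    rfl

lemma mk_psi (L : List Ltr) : FreeGroup.mk (ψ L) = φW (FreeGroup.mk L) := by
  induction L using ψ.induct with
  | case1 => simp [ψ, show FreeGroup.mk ([] : List Ltr) = 1 from rfl]
  | case2 r ih =>
    show FreeGroup.mk ((false, false) :: ψ r) = _
    simp [mk_cons, map_mul, map_inv, ih]; group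
  | case3 r ih =>
    show FreeGroup.mk ((false, true) :: ψ r) = _
    simp [mk_cons, map_mul, map_inv, ih]
  | case4 r hg ih =>
    rw [psi_eq_x r hg]
    simp [mk_cons, map_mul, map_inv, ih]
  | case5 r ih =>
    show FreeGroup.mk ((true, false) :: ψ r) = _
    simp [mk_cons, map_mul, map_inv, ih]
  | case6 r ih =>
    show FreeGroup.mk ((true, false) :: (false, false) :: ψ r) = _
    simp [mk_cons, map_mul, map_inv, ih]; group
  | case7 r hg ih =>
    rw [psi_eq_Y r hg]
    simp [mk_cons, map_mul, map_inv, ih]; group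

lemma fix_phiW {w : FreeGroup Bool} (h : φW w = w) : w = 1 := by
  by_contra hw
  have hL : Rd w.toWord := by
    rw [← FreeGroup.reduce_toWord]; exact rd_reduce _
  have hne : w.toWord ≠ [] := fun hnil => hw (FreeGroup.toWord_eq_nil_iff.mp hnil)
  have h1 : w = FreeGroup.mk (ψ w.toWord) := by
    rw [mk_psi, FreeGroup.mk_toWord, h]
  have h2 : w.toWord = ψ w.toWord := by
    conv_lhs => rw [h1]
    rw [FreeGroup.toWord_mk, reduce_eq_self (psi_rd _ hL)]
  rcases hLw : w.toWord with _ | ⟨p, r⟩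
  · exact hne hLw
  · have := psi_head p r
    rw [← hLw, ← h2, hLw] at this
    simp only [List.head?_cons, Option.some.injEq] at this
    exact f2_ne p _ this.symm

/-- the "invert generators" automorphism -/
def ιW : FreeGroup Bool →* FreeGroup Bool := FreeGroup.lift (fun t => (FreeGroup.of t)⁻¹)

@[simp] lemma ιW_of (t : Bool) : ιW (FreeGroup.of t) = (FreeGroup.of t)⁻¹ := by simp [ιW]

lemma ιW_ιW (w : FreeGroup Bool) : ιW (ιW w) = w := by
  have : ιW.comp ιW = MonoidHom.id _ := by
    apply FreeGroup.ext_hom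
    intro a; simp
  calc ιW (ιW w) = (ιW.comp ιW) w := rfl
  _ = w := by rw [this]; rfl

/-- `x ↦ y`, `y ↦ (yx)⁻¹` -/
def φW2 : FreeGroup Bool →* FreeGroup Bool :=
  FreeGroup.lift (fun t => if t then (FreeGroup.of true * FreeGroup.of false)⁻¹
    else FreeGroup.of true)

@[simp] lemma φW2_x : φW2 (FreeGroup.of false) = FreeGroup.of true := by simp [φW2]

@[simp] lemma φW2_y : φW2 (FreeGroup.of true) = (FreeGroup.of true * FreeGroup.of false)⁻¹ := by
  simp [φW2]

lemma φW2_eq (w : FreeGroup Bool) : φW2 w = ιW (φW (ιW w)) := by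
  have : φW2 = (ιW.comp φW).comp ιW := by
    apply FreeGroup.ext_hom
    intro a
    rcases a
    · simp
    · simp
  rw [this]; rfl

lemma fix_phiW2 {w : FreeGroup Bool} (h : φW2 w = w) : w = 1 := by
  rw [φW2_eq] at h
  have h2 : φW (ιW w) = ιW w := by
    have := congrArg ιW h
    rwa [ιW_ιW] at this
  have := fix_phiW h2
  have := congrArg ιW this
  rwa [ιW_ιW, map_one] at this

end WordAux

namespace CPGAux
open CPG

abbrev M3 := Multiplicative (ZMod 3)
abbrev C33 := Monoid.Coprod M3 M3

def bC : C33 := Monoid.Coprod.inl (Multiplicative.ofAdd 1)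
def cC : C33 := Monoid.Coprod.inr (Multiplicative.ofAdd 1)

lemma ofAdd_one_pow3 : (Multiplicative.ofAdd (1 : ZMod 3)) ^ 3 = 1 := by decide

lemma bC_pow3 : bC ^ 3 = 1 := by
  rw [bC, ← map_pow, ofAdd_one_pow3, map_one]

lemma cC_pow3 : cC ^ 3 = 1 := by
  rw [cC, ← map_pow, ofAdd_one_pow3, map_one]

lemma cC_mul3 : cC * cC * cC = 1 := by
  have := cC_pow3
  rw [pow_succ, pow_two] at this
  exact this

lemma bC_zpow (m : ℤ) : bC ^ m = Monoid.Coprod.inl (Multiplicative.ofAdd ((m : ZMod 3))) := by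
  rw [bC, ← map_zpow]
  congr 1
  rw [← ofAdd_zsmul]
  congr 1
  rw [zsmul_eq_mul, mul_one]

lemma bC_zpow_eq_one {m : ℤ} (hm : (3 : ℤ) ∣ m) : bC ^ m = 1 := by
  rw [bC_zpow, (ZMod.intCast_zmod_eq_zero_iff_dvd m 3).mpr hm]
  simp

/-- generic computation used for the relator -/
lemma tri {G : Type*} [Group G] (c A B C' D : G) (hAB : A * B = 1) (hAC : A * C' = 1)
    (hAD : A * D = 1) (hccc : c * c * c = 1) :
    c * A * B * (c * A) * C' * (c * A) * D = 1 := by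
  rw [eq_inv_of_mul_eq_one_right hAB, eq_inv_of_mul_eq_one_right hAC,
    eq_inv_of_mul_eq_one_right hAD]
  simpa [mul_assoc] using hccc

section
variable {k l : ℤ}

/-- helper: homomorphism out of `Multiplicative (ZMod 3)` from an element of order dividing 3 -/
def zmod3Hom {H : Type*} [Group H] (g : H) (hg : g ^ 3 = 1) : Multiplicative (ZMod 3) →* H where
  toFun m := g ^ (Multiplicative.toAdd m).val
  map_one' := by
    show g ^ (0 : ZMod 3).val = 1
    simp [ZMod.val_zero]
  map_mul' a b := by
    show g ^ ((Multiplicative.toAdd a) + (Multiplicative.toAdd b)).val = _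
    have key : ∀ m : ℕ, g ^ m = g ^ (m % 3) := by
      intro m
      conv_lhs => rw [← Nat.div_add_mod m 3]
      rw [pow_add, pow_mul, hg, one_pow, one_mul]
    rw [ZMod.val_add, ← key, pow_add]

lemma zmod3Hom_ofAdd_one {H : Type*} [Group H] (g : H) (hg : g ^ 3 = 1) :
    zmod3Hom g hg (Multiplicative.ofAdd 1) = g := by
  show g ^ (1 : ZMod 3).val = g
  rw [show (1 : ZMod 3).val = 1 by decide, pow_one]

lemma mhom_ext3 {H : Type*} [Monoid H] {f g : Multiplicative (ZMod 3) →* H}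
    (h : f (Multiplicative.ofAdd 1) = g (Multiplicative.ofAdd 1)) : f = g := by
  refine MonoidHom.ext fun m => ?_
  have h0 : m = Multiplicative.ofAdd (Multiplicative.toAdd m) := rfl
  have h3 : ∀ z : ZMod 3, z = 0 ∨ z = 1 ∨ z = 2 := by decide
  rcases h3 (Multiplicative.toAdd m) with hz | hz | hz
  · rw [h0, hz]
    simp only [ofAdd_zero, map_one]
  · rw [h0, hz]; exact h
  · rw [h0, hz, show (Multiplicative.ofAdd (2 : ZMod 3)) =
      Multiplicative.ofAdd 1 * Multiplicative.ofAdd 1 by decide, map_mul, map_mul, h]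

variable (h3 : (3 : ℤ) ∣ (k + l))

lemma relE_one {r : FreeGroup Bool} (h : r ∈ relsE 3 k l) :
    PresentedGroup.mk (relsE 3 k l) r = 1 :=
  (QuotientGroup.eq_one_iff _).mpr (Subgroup.subset_normalClosure h)

lemma aE_cube : (aE 3 k l) ^ 3 = 1 := by
  have := relE_one (k := k) (l := l) (Or.inl rfl)
  rw [map_pow] at this
  exact this

lemma aE_zpow_eq_one {m : ℤ} (hm : (3 : ℤ) ∣ m) : (aE 3 k l) ^ m = 1 := by
  obtain ⟨t, rfl⟩ := hm
  rw [zpow_mul, show ((3 : ℤ)) = ((3 : ℕ) : ℤ) by norm_num, zpow_natCast, aE_cube, one_zpow]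

lemma relator2 : xE 3 k l * (aE 3 k l) ^ k * xE 3 k l * (aE 3 k l) ^ (l - k) * xE 3 k l *
    (aE 3 k l) ^ (-l) = 1 := by
  have := relE_one (k := k) (l := l) (Or.inr rfl)
  simp only [map_mul, map_zpow] at this
  exact this

lemma aE_zpow_congr {m m' : ℤ} (hm : (3 : ℤ) ∣ (m - m')) :
    (aE 3 k l) ^ m = (aE 3 k l) ^ m' := by
  have : (aE 3 k l) ^ m = (aE 3 k l) ^ (m - m') * (aE 3 k l) ^ m' := by
    rw [← zpow_add]; ring_nf
  rw [this, aE_zpow_eq_one hm, one_mul]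

include h3 in
lemma xa_cube : (xE 3 k l * (aE 3 k l) ^ k) ^ 3 = 1 := by
  have h := relator2 (k := k) (l := l)
  rw [aE_zpow_congr (m := l - k) (m' := k) (by omega),
    aE_zpow_congr (m := -l) (m' := k) (by omega)] at h
  rw [pow_succ, pow_two]
  simpa [mul_assoc] using h

/-- the map `a ↦ b`, `x ↦ c b^{-k}` -/
def fE (k : ℤ) : Bool → C33 := fun t => if t then cC * bC ^ (-k) else bC

include h3 in
lemma frelsC : ∀ r ∈ relsE 3 k l, FreeGroup.lift (fE k) r = 1 := by
  rintro r (rfl | rfl)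
  · rw [map_pow, show FreeGroup.lift (fE k) ga = bC by simp [ga, fE], bC_pow3]
  · have expand : FreeGroup.lift (fE k) (gx * ga ^ k * gx * ga ^ (l - k) * gx * ga ^ (-l)) =
        cC * bC ^ (-k) * bC ^ k * (cC * bC ^ (-k)) * bC ^ (l - k) * (cC * bC ^ (-k)) *
          bC ^ (-l) := by
      simp [map_mul, map_zpow, ga, gx, fE]
    rw [expand]
    exact tri cC (bC ^ (-k)) (bC ^ k) (bC ^ (l - k)) (bC ^ (-l))
      (by rw [← zpow_add]; simp)
      (by rw [← zpow_add]; exact bC_zpow_eq_one (by omega))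
      (by rw [← zpow_add]; exact bC_zpow_eq_one (by omega))
      cC_mul3

/-- forward homomorphism `E_3(k,l) →* C₃ ∗ C₃` -/
noncomputable def ΦE : Ekl 3 k l →* C33 := PresentedGroup.toGroup (frelsC h3)

/-- backward homomorphism -/
noncomputable def ΨE : C33 →* Ekl 3 k l :=
  Monoid.Coprod.lift (zmod3Hom (aE 3 k l) aE_cube)
    (zmod3Hom (xE 3 k l * (aE 3 k l) ^ k) (xa_cube h3))

lemma ΨE_bC : ΨE h3 bC = aE 3 k l := by
  rw [ΨE, bC, Monoid.Coprod.lift_apply_inl, zmod3Hom_ofAdd_one]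

lemma ΨE_cC : ΨE h3 cC = xE 3 k l * (aE 3 k l) ^ k := by
  rw [ΨE, cC, Monoid.Coprod.lift_apply_inr, zmod3Hom_ofAdd_one]

lemma ΦE_aE : ΦE h3 (aE 3 k l) = bC := by
  rw [aE, ΦE]
  exact PresentedGroup.toGroup.of _

lemma ΦE_xE : ΦE h3 (xE 3 k l) = cC * bC ^ (-k) := by
  rw [xE, ΦE]
  exact PresentedGroup.toGroup.of _

noncomputable def eklEquiv : Ekl 3 k l ≃* C33 := by
  refine MonoidHom.toMulEquiv (ΦE h3) (ΨE h3) ?_ ?_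
  · apply PresentedGroup.ext
    intro t
    rcases t
    · show ΨE h3 (ΦE h3 (aE 3 k l)) = aE 3 k l
      rw [ΦE_aE, ΨE_bC]
    · show ΨE h3 (ΦE h3 (xE 3 k l)) = xE 3 k l
      rw [ΦE_xE, map_mul, map_zpow, ΨE_bC, ΨE_cC, mul_assoc, ← zpow_add]
      simp
  · apply Monoid.Coprod.hom_ext
    · apply mhom_ext3
      show ΦE h3 (ΨE h3 bC) = bC
      rw [ΨE_bC, ΦE_aE]
    · apply mhom_ext3
      show ΦE h3 (ΨE h3 cC) = cC
      rw [ΨE_cC, map_mul, map_zpow, ΦE_aE, ΦE_xE, mul_assoc, ← zpow_add]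
      simp

end

-- part B glue
section
variable {k l : ℤ}

lemma shift_wkl (k l : ℤ) (i : ZMod 3) :
    shiftA 3 i (wkl 3 k l) =
      FreeGroup.of i * FreeGroup.of ((k : ZMod 3) + i) * FreeGroup.of ((l : ZMod 3) + i) := by
  simp [wkl, xg, shiftA, map_mul]

lemma relG_one {r : FG 3} (h : r ∈ rels 3 (wkl 3 k l)) :
    PresentedGroup.mk (rels 3 (wkl 3 k l)) r = 1 :=
  (QuotientGroup.eq_one_iff _).mpr (Subgroup.subset_normalClosure h)

lemma shiftKL_of (i : ZMod 3) :
    shiftKL 3 k l (PresentedGroup.of i) = PresentedGroup.of (i + 1) := by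
  show QuotientGroup.congr (Subgroup.normalClosure (rels 3 (wkl 3 k l)))
      (Subgroup.normalClosure (rels 3 (wkl 3 k l))) (shiftAut 3)
      (map_normalClosure_rels 3 (wkl 3 k l)) (QuotientGroup.mk (FreeGroup.of i)) =
      PresentedGroup.of (i + 1)
  erw [QuotientGroup.congr_mk]
  have h2 : shiftAut 3 (FreeGroup.of i) = FreeGroup.of (i + 1) := by
    simp [shiftAut, shiftA]
  rw [h2]
  rfl

lemma shiftKL_cube (g : Gkl 3 k l) :
    shiftKL 3 k l (shiftKL 3 k l (shiftKL 3 k l g)) = g := by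
  refine QuotientGroup.induction_on g fun z => ?_
  show QuotientGroup.congr (Subgroup.normalClosure (rels 3 (wkl 3 k l)))
      (Subgroup.normalClosure (rels 3 (wkl 3 k l))) (shiftAut 3)
      (map_normalClosure_rels 3 (wkl 3 k l))
      (QuotientGroup.congr _ _ (shiftAut 3) (map_normalClosure_rels 3 (wkl 3 k l))
        (QuotientGroup.congr _ _ (shiftAut 3) (map_normalClosure_rels 3 (wkl 3 k l))
          (QuotientGroup.mk z))) = (QuotientGroup.mk z : Gp 3 (wkl 3 k l))
  erw [QuotientGroup.congr_mk]
  have : shiftAut 3 (shiftAut 3 (shiftAut 3 z)) = z := by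
    show shiftA 3 1 (shiftA 3 1 (shiftA 3 1 z)) = z
    rw [shiftA_shiftA, shiftA_shiftA]
    have h0 : ((1 : ZMod 3) + (1 + 1)) = 0 := by decide
    rw [h0]
    show FreeGroup.freeGroupCongr (Equiv.addRight (0 : ZMod 3)) z = z
    have he : Equiv.addRight (0 : ZMod 3) = Equiv.refl (ZMod 3) := by
      ext j; simp
    rw [he, FreeGroup.freeGroupCongr_refl]
    rfl
  erw [this]
end

end CPGAux

namespace CPGAux
open CPG WordAux

section
variable {k l : ℤ}

/-- generator images for the case `k ≡ 1, l ≡ 2 (mod 3)` -/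
def fμ1 : ZMod 3 → FreeGroup Bool := fun i =>
  if i = 0 then FreeGroup.of false
  else if i = 1 then FreeGroup.of true
  else (FreeGroup.of false * FreeGroup.of true)⁻¹

lemma fμ1_0 : fμ1 0 = FreeGroup.of false := by simp [fμ1]
lemma fμ1_1 : fμ1 1 = FreeGroup.of true := by
  simp [fμ1, show (1 : ZMod 3) ≠ 0 by decide]
lemma fμ1_2 : fμ1 2 = (FreeGroup.of false * FreeGroup.of true)⁻¹ := by
  simp [fμ1, show (2 : ZMod 3) ≠ 0 by decide, show (2 : ZMod 3) ≠ 1 by decide]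

/-- generator images for the case `k ≡ 2, l ≡ 1 (mod 3)` -/
def fμ2 : ZMod 3 → FreeGroup Bool := fun i =>
  if i = 0 then FreeGroup.of false
  else if i = 1 then FreeGroup.of true
  else (FreeGroup.of true * FreeGroup.of false)⁻¹

lemma fμ2_0 : fμ2 0 = FreeGroup.of false := by simp [fμ2]
lemma fμ2_1 : fμ2 1 = FreeGroup.of true := by
  simp [fμ2, show (1 : ZMod 3) ≠ 0 by decide]
lemma fμ2_2 : fμ2 2 = (FreeGroup.of true * FreeGroup.of false)⁻¹ := by
  simp [fμ2, show (2 : ZMod 3) ≠ 0 by decide, show (2 : ZMod 3) ≠ 1 by decide]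

lemma zmod3_cases (z : ZMod 3) : z = 0 ∨ z = 1 ∨ z = 2 := by revert z; decide

lemma frel1 (hk : (k : ZMod 3) = 1) (hl : (l : ZMod 3) = 2) :
    ∀ r ∈ rels 3 (wkl 3 k l), FreeGroup.lift fμ1 r = 1 := by
  rintro r ⟨i, rfl⟩
  simp only [shift_wkl k l]
  rw [hk, hl]
  rcases zmod3_cases i with rfl | rfl | rfl
  · rw [show (1 + 0 : ZMod 3) = 1 by decide, show (2 + 0 : ZMod 3) = 2 by decide,
      map_mul, map_mul, FreeGroup.lift_apply_of, FreeGroup.lift_apply_of, FreeGroup.lift_apply_of,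
      fμ1_0, fμ1_1, fμ1_2]
    group
  · rw [show (1 + 1 : ZMod 3) = 2 by decide, show (2 + 1 : ZMod 3) = 0 by decide,
      map_mul, map_mul, FreeGroup.lift_apply_of, FreeGroup.lift_apply_of, FreeGroup.lift_apply_of,
      fμ1_0, fμ1_1, fμ1_2]
    group
  · rw [show (1 + 2 : ZMod 3) = 0 by decide, show (2 + 2 : ZMod 3) = 1 by decide,
      map_mul, map_mul, FreeGroup.lift_apply_of, FreeGroup.lift_apply_of, FreeGroup.lift_apply_of,
      fμ1_0, fμ1_1, fμ1_2]
    group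

lemma frel2 (hk : (k : ZMod 3) = 2) (hl : (l : ZMod 3) = 1) :
    ∀ r ∈ rels 3 (wkl 3 k l), FreeGroup.lift fμ2 r = 1 := by
  rintro r ⟨i, rfl⟩
  simp only [shift_wkl k l]
  rw [hk, hl]
  rcases zmod3_cases i with rfl | rfl | rfl
  · rw [show (2 + 0 : ZMod 3) = 2 by decide, show (1 + 0 : ZMod 3) = 1 by decide,
      map_mul, map_mul, FreeGroup.lift_apply_of, FreeGroup.lift_apply_of, FreeGroup.lift_apply_of,
      fμ2_0, fμ2_1, fμ2_2]
    group
  · rw [show (2 + 1 : ZMod 3) = 0 by decide, show (1 + 1 : ZMod 3) = 2 by decide,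
      map_mul, map_mul, FreeGroup.lift_apply_of, FreeGroup.lift_apply_of, FreeGroup.lift_apply_of,
      fμ2_0, fμ2_1, fμ2_2]
    group
  · rw [show (2 + 2 : ZMod 3) = 1 by decide, show (1 + 2 : ZMod 3) = 0 by decide,
      map_mul, map_mul, FreeGroup.lift_apply_of, FreeGroup.lift_apply_of, FreeGroup.lift_apply_of,
      fμ2_0, fμ2_1, fμ2_2]
    group

/-- the homomorphism `G_3(k,l) →* F_2` for the first case -/
noncomputable def μ1 (hk : (k : ZMod 3) = 1) (hl : (l : ZMod 3) = 2) :
    Gkl 3 k l →* FreeGroup Bool := PresentedGroup.toGroup (frel1 hk hl)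

noncomputable def μ2 (hk : (k : ZMod 3) = 2) (hl : (l : ZMod 3) = 1) :
    Gkl 3 k l →* FreeGroup Bool := PresentedGroup.toGroup (frel2 hk hl)

/-- the homomorphism `F_2 →* G_3(k,l)` -/
def νG (k l : ℤ) : FreeGroup Bool →* Gkl 3 k l :=
  FreeGroup.lift (fun t => if t then (PresentedGroup.of (1 : ZMod 3) : Gkl 3 k l)
    else PresentedGroup.of (0 : ZMod 3))

lemma νG_false : νG k l (FreeGroup.of false) = PresentedGroup.of (0 : ZMod 3) := by
  rw [νG, FreeGroup.lift_apply_of]; simp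

lemma νG_true : νG k l (FreeGroup.of true) = PresentedGroup.of (1 : ZMod 3) := by
  rw [νG, FreeGroup.lift_apply_of]; simp

lemma rel012 (hk : (k : ZMod 3) = 1) (hl : (l : ZMod 3) = 2) :
    (PresentedGroup.of (0 : ZMod 3) : Gkl 3 k l) * PresentedGroup.of 1 *
      PresentedGroup.of 2 = 1 := by
  have h := relG_one (k := k) (l := l) ⟨0, rfl⟩
  simp only [shift_wkl k l] at h
  rw [hk, hl, show (1 + 0 : ZMod 3) = 1 by decide,
    show (2 + 0 : ZMod 3) = 2 by decide, map_mul, map_mul] at h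
  exact h

lemma rel021 (hk : (k : ZMod 3) = 2) (hl : (l : ZMod 3) = 1) :
    (PresentedGroup.of (0 : ZMod 3) : Gkl 3 k l) * PresentedGroup.of 2 *
      PresentedGroup.of 1 = 1 := by
  have h := relG_one (k := k) (l := l) ⟨0, rfl⟩
  simp only [shift_wkl k l] at h
  rw [hk, hl, show (1 + 0 : ZMod 3) = 1 by decide,
    show (2 + 0 : ZMod 3) = 2 by decide, map_mul, map_mul] at h
  exact h

lemma nu_mu1 (hk : (k : ZMod 3) = 1) (hl : (l : ZMod 3) = 2) (g : Gkl 3 k l) :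
    νG k l (μ1 hk hl g) = g := by
  have hcomp : (νG k l).comp (μ1 hk hl) = MonoidHom.id _ := by
    apply PresentedGroup.ext
    intro i
    show νG k l (μ1 hk hl (PresentedGroup.of i)) = PresentedGroup.of i
    rw [μ1, PresentedGroup.toGroup.of]
    rcases zmod3_cases i with rfl | rfl | rfl
    · rw [fμ1_0, νG_false]
    · rw [fμ1_1, νG_true]
    · rw [fμ1_2, map_inv, map_mul, νG_false, νG_true]
      rw [← eq_inv_of_mul_eq_one_right (rel012 hk hl)]
  calc νG k l (μ1 hk hl g) = ((νG k l).comp (μ1 hk hl)) g := rfl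
  _ = g := by rw [hcomp]; rfl

lemma nu_mu2 (hk : (k : ZMod 3) = 2) (hl : (l : ZMod 3) = 1) (g : Gkl 3 k l) :
    νG k l (μ2 hk hl g) = g := by
  have h2 : (PresentedGroup.of (2 : ZMod 3) : Gkl 3 k l) =
      (PresentedGroup.of (1 : ZMod 3) * PresentedGroup.of (0 : ZMod 3))⁻¹ := by
    have h := rel021 hk hl
    have h' : (PresentedGroup.of (0 : ZMod 3) : Gkl 3 k l)⁻¹ *
        (PresentedGroup.of (0 : ZMod 3) * PresentedGroup.of 2 * PresentedGroup.of 1) *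
        (PresentedGroup.of (1 : ZMod 3))⁻¹ =
        (PresentedGroup.of (0 : ZMod 3) : Gkl 3 k l)⁻¹ * 1 *
          (PresentedGroup.of (1 : ZMod 3))⁻¹ := by rw [h]
    rw [mul_inv_rev]
    simpa [mul_assoc] using h'
  have hcomp : (νG k l).comp (μ2 hk hl) = MonoidHom.id _ := by
    apply PresentedGroup.ext
    intro i
    show νG k l (μ2 hk hl (PresentedGroup.of i)) = PresentedGroup.of i
    rw [μ2, PresentedGroup.toGroup.of]
    rcases zmod3_cases i with rfl | rfl | rfl
    · rw [fμ2_0, νG_false]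
    · rw [fμ2_1, νG_true]
    · rw [fμ2_2, map_inv, map_mul, νG_false, νG_true, ← h2]
  calc νG k l (μ2 hk hl g) = ((νG k l).comp (μ2 hk hl)) g := rfl
  _ = g := by rw [hcomp]; rfl

lemma inter1 (hk : (k : ZMod 3) = 1) (hl : (l : ZMod 3) = 2) (g : Gkl 3 k l) :
    μ1 hk hl (shiftKL 3 k l g) = φW (μ1 hk hl g) := by
  have hcomp : (μ1 hk hl).comp (shiftKL 3 k l).toMonoidHom = φW.comp (μ1 hk hl) := by
    apply PresentedGroup.ext
    intro i
    show μ1 hk hl (shiftKL 3 k l (PresentedGroup.of i)) = φW (μ1 hk hl (PresentedGroup.of i))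
    rw [shiftKL_of, μ1, PresentedGroup.toGroup.of, PresentedGroup.toGroup.of]
    rcases zmod3_cases i with rfl | rfl | rfl
    · rw [show (0 + 1 : ZMod 3) = 1 by decide, fμ1_0, fμ1_1, φW_x]
    · rw [show (1 + 1 : ZMod 3) = 2 by decide, fμ1_1, fμ1_2, φW_y]
    · rw [show (2 + 1 : ZMod 3) = 0 by decide, fμ1_0, fμ1_2, map_inv, map_mul, φW_x, φW_y]
      group
  calc μ1 hk hl (shiftKL 3 k l g) = ((μ1 hk hl).comp (shiftKL 3 k l).toMonoidHom) g := rfl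
  _ = (φW.comp (μ1 hk hl)) g := by rw [hcomp]
  _ = φW (μ1 hk hl g) := rfl

lemma inter2 (hk : (k : ZMod 3) = 2) (hl : (l : ZMod 3) = 1) (g : Gkl 3 k l) :
    μ2 hk hl (shiftKL 3 k l g) = φW2 (μ2 hk hl g) := by
  have hcomp : (μ2 hk hl).comp (shiftKL 3 k l).toMonoidHom = φW2.comp (μ2 hk hl) := by
    apply PresentedGroup.ext
    intro i
    show μ2 hk hl (shiftKL 3 k l (PresentedGroup.of i)) = φW2 (μ2 hk hl (PresentedGroup.of i))
    rw [shiftKL_of, μ2, PresentedGroup.toGroup.of, PresentedGroup.toGroup.of]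
    rcases zmod3_cases i with rfl | rfl | rfl
    · rw [show (0 + 1 : ZMod 3) = 1 by decide, fμ2_0, fμ2_1, φW2_x]
    · rw [show (1 + 1 : ZMod 3) = 2 by decide, fμ2_1, fμ2_2, φW2_y]
    · rw [show (2 + 1 : ZMod 3) = 0 by decide, fμ2_0, fμ2_2, map_inv, map_mul, φW2_x, φW2_y]
      group
  calc μ2 hk hl (shiftKL 3 k l g) = ((μ2 hk hl).comp (shiftKL 3 k l).toMonoidHom) g := rfl
  _ = (φW2.comp (μ2 hk hl)) g := by rw [hcomp]
  _ = φW2 (μ2 hk hl g) := rfl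

lemma fixed_theta (hk : (k : ZMod 3) ≠ 0) (hl : (l : ZMod 3) = -(k : ZMod 3))
    (g : Gkl 3 k l) (hfix : shiftKL 3 k l g = g) : g = 1 := by
  have hcases : (k : ZMod 3) = 1 ∨ (k : ZMod 3) = 2 := by
    rcases zmod3_cases (k : ZMod 3) with h | h | h
    · exact absurd h hk
    · exact Or.inl h
    · exact Or.inr h
  rcases hcases with hk1 | hk2
  · have hl2 : (l : ZMod 3) = 2 := by rw [hl, hk1]; decide
    have h1 : μ1 hk1 hl2 g = φW (μ1 hk1 hl2 g) := by
      conv_lhs => rw [← hfix]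
      exact inter1 hk1 hl2 g
    have h2 : μ1 hk1 hl2 g = 1 := fix_phiW h1.symm
    have := nu_mu1 hk1 hl2 g
    rw [h2, map_one] at this
    exact this.symm
  · have hl1 : (l : ZMod 3) = 1 := by rw [hl, hk2]; decide
    have h1 : μ2 hk2 hl1 g = φW2 (μ2 hk2 hl1 g) := by
      conv_lhs => rw [← hfix]
      exact inter2 hk2 hl1 g
    have h2 : μ2 hk2 hl1 g = 1 := fix_phiW2 h1.symm
    have := nu_mu2 hk2 hl1 g
    rw [h2, map_one] at this
    exact this.symm

end
end CPGAux
/-- Under condition (B) for `n = 3` with `gcd(3,k,l) = 1`, the group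
`E_3(k,l)` is the free product `C₃ ∗ C₃` and the shift acts freely on the nonidentity
elements of `G_3(k,l)`. -/
theorem statement9 (k l : ℤ) (hgcd : Int.gcd (3 : ℤ) (Int.gcd k l) = 1)
    (hB : (3 : ℤ) ∣ (k + l) ∨ (3 : ℤ) ∣ (2 * k - l) ∨ (3 : ℤ) ∣ (2 * l - k)) :
    Nonempty (CPG.Ekl 3 k l ≃*
      Monoid.Coprod (Multiplicative (ZMod 3)) (Multiplicative (ZMod 3))) ∧
    ∀ g : CPG.Gkl 3 k l, g ≠ 1 → ∀ j : ℕ, (j = 1 ∨ j = 2) →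
      (CPG.shiftKL 3 k l ^ j) g ≠ g := by
  have h3 : (3 : ℤ) ∣ (k + l) := by rcases hB with h | h | h <;> omega
  have hk0 : (k : ZMod 3) ≠ 0 := by
    intro h0
    have h3k : (3 : ℤ) ∣ k := (ZMod.intCast_zmod_eq_zero_iff_dvd k 3).mp h0
    have h3l : (3 : ℤ) ∣ l := by omega
    have hd : (3 : ℤ) ∣ (Int.gcd k l : ℤ) := by
      have := Int.dvd_gcd (c := 3) (a := k) (b := l) (by exact_mod_cast h3k) (by exact_mod_cast h3l)
      exact_mod_cast this
    have hd2 : (3 : ℤ) ∣ (Int.gcd (3 : ℤ) (Int.gcd k l) : ℤ) := by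
      have := Int.dvd_gcd (c := 3) (a := 3) (b := (Int.gcd k l : ℤ)) (by exact_mod_cast dvd_rfl) (by exact_mod_cast hd)
      exact_mod_cast this
    rw [hgcd] at hd2
    norm_num at hd2
  have hlk : (l : ZMod 3) = -(k : ZMod 3) := by
    have hc : ((k + l : ℤ) : ZMod 3) = 0 := by
      rw [ZMod.intCast_zmod_eq_zero_iff_dvd]; exact h3
    push_cast at hc
    exact eq_neg_of_add_eq_zero_right hc
  constructor
  · exact ⟨CPGAux.eklEquiv h3⟩
  · intro g hg j hj H
    apply hg
    rcases hj with rfl | rfl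
    · rw [pow_one] at H
      exact CPGAux.fixed_theta hk0 hlk g H
    · rw [pow_two] at H
      have H2 : CPG.shiftKL 3 k l (CPG.shiftKL 3 k l g) = g := H
      have H3 := congrArg (fun z => CPG.shiftKL 3 k l z) H2
      rw [CPGAux.shiftKL_cube g] at H3
      exact CPGAux.fixed_theta hk0 hlk g H3.symm
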